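/- Let N be a finite set with |N| ≥ 2. A nontrivial set system S on N is min-semi-balanced if and only if S is semi-balanced on N, the incidence vectors {χ_S : S ∈ S} are affinely independent, and moreover in the case ⋃S = N they are linearly independent. -/

import Mathlib

open Finset

variable {α : Type*} [Fintype α] [DecidableEq α]

/-- Incidence (0/1 indicator) vector of a subset `S` of the player set. -/
def chi (S : Finset α) : α → ℝ := fun i => if i ∈ S then 1 else 0

/-- A non-trivial set system on `N`: nonempty, not containing `∅` nor `N`. -/
def IsNontrivial (𝒮 : Finset (Finset α)) : Prop :=
  𝒮.Nonempty ∧ ∅ ∉ 𝒮 ∧ (Finset.univ : Finset α) ∉ 𝒮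

/-- A combination is semi-conic if at most one coefficient is strictly negative. -/
def SemiConic (𝒮 : Finset (Finset α)) (lam : Finset α → ℝ) : Prop :=
  (𝒮.filter fun S => lam S < 0).card ≤ 1

/-- The combination `∑_{S ∈ 𝒮} lam S • χ_S` yields the constant vector `[r,…,r]`. -/
def CombYields (𝒮 : Finset (Finset α)) (lam : Finset α → ℝ) (r : ℝ) : Prop :=
  ∀ i : α, ∑ S ∈ 𝒮, lam S * chi S i = r

/-- A semi-balanced set system on `N`. -/
def IsSemiBalanced (𝒮 : Finset (Finset α)) : Prop :=
  IsNontrivial 𝒮 ∧ ∃ (lam : Finset α → ℝ) (r : ℝ),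
    CombYields 𝒮 lam r ∧ SemiConic 𝒮 lam ∧ ∀ S ∈ 𝒮, lam S ≠ 0

/-- A minimal semi-balanced set system on `N`. -/
def IsMinSemiBalanced (𝒮 : Finset (Finset α)) : Prop :=
  IsSemiBalanced 𝒮 ∧ ∀ 𝒞 ⊂ 𝒮, ¬ IsSemiBalanced 𝒞

/-- A balanced set system on `N`. -/
def IsBalanced (ℬ : Finset (Finset α)) : Prop :=
  IsNontrivial ℬ ∧ ∃ lam : Finset α → ℝ,
    (∀ S ∈ ℬ, 0 < lam S) ∧ ∀ i : α, ∑ S ∈ ℬ, lam S * chi S i = 1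

/-- A minimal balanced set system on `N`. -/
def IsMinBalanced (ℬ : Finset (Finset α)) : Prop :=
  IsBalanced ℬ ∧ ∀ 𝒞 ⊂ ℬ, ¬ IsBalanced 𝒞

/-- A set `T ∈ 𝒮` is exceptional within `𝒮`. -/
def IsExceptional (𝒮 : Finset (Finset α)) (T : Finset α) : Prop :=
  T ∈ 𝒮 ∧ ∃ (lam : Finset α → ℝ) (r : ℝ),
    CombYields 𝒮 lam r ∧ lam T < 0 ∧ ∀ S ∈ 𝒮, S ≠ T → 0 ≤ lam S

/-- Affine independence of the incidence vectors of the members of `𝒮`. -/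
def AffIndep (𝒮 : Finset (Finset α)) : Prop :=
  ∀ c : Finset α → ℝ, (∑ S ∈ 𝒮, c S = 0) → (∀ i : α, ∑ S ∈ 𝒮, c S * chi S i = 0) →
    ∀ S ∈ 𝒮, c S = 0

/-- Linear independence of the incidence vectors of the members of `𝒮`. -/
def LinIndep (𝒮 : Finset (Finset α)) : Prop :=
  ∀ c : Finset α → ℝ, (∀ i : α, ∑ S ∈ 𝒮, c S * chi S i = 0) → ∀ S ∈ 𝒮, c S = 0


private lemma chi_sum (S : Finset α) : ∑ i, chi S i = (S.card : ℝ) := by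
  unfold chi
  rw [Finset.sum_boole]
  congr 1
  refine congrArg Finset.card ?_
  ext i
  simp

private lemma deg_common (𝒮 : Finset (Finset α)) (hnt : IsNontrivial 𝒮)
    (lam : Finset α → ℝ) (hy : CombYields 𝒮 lam 0) (hsc : SemiConic 𝒮 lam)
    (hnz : ∀ S ∈ 𝒮, lam S ≠ 0) :
    ∃ T ∈ 𝒮, lam T < 0 ∧ (∀ S ∈ 𝒮, S ≠ T → 0 < lam S) ∧
      ∀ i : α, i ∉ T → ∀ S ∈ 𝒮, i ∉ S := by
  have hcard : ∑ S ∈ 𝒮, lam S * (S.card : ℝ) = 0 := by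
    have h1 : ∑ i : α, ∑ S ∈ 𝒮, lam S * chi S i = 0 := by
      rw [Finset.sum_congr rfl (fun i _ => hy i)]
      simp
    rw [Finset.sum_comm] at h1
    calc ∑ S ∈ 𝒮, lam S * (S.card : ℝ)
        = ∑ S ∈ 𝒮, ∑ i : α, lam S * chi S i := by
          refine Finset.sum_congr rfl fun S _ => ?_
          rw [← Finset.mul_sum, chi_sum]
      _ = 0 := h1
  have hTex : ∃ T ∈ 𝒮, lam T < 0 := by
    by_contra hcon
    push_neg at hcon
    have hpos : 0 < ∑ S ∈ 𝒮, lam S * (S.card : ℝ) := by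
      refine Finset.sum_pos (fun S hS => ?_) hnt.1
      have h1 : 0 < lam S := lt_of_le_of_ne (hcon S hS) (Ne.symm (hnz S hS))
      have h2 : 0 < S.card := Finset.card_pos.mpr
        (Finset.nonempty_iff_ne_empty.mpr (by rintro rfl; exact hnt.2.1 hS))
      positivity
    linarith [hcard]
  obtain ⟨T, hT, hTneg⟩ := hTex
  have huniq : ∀ S ∈ 𝒮, S ≠ T → 0 < lam S := by
    intro S hS hST
    rcases lt_trichotomy (lam S) 0 with h | h | h
    · exfalso
      have : 1 < (𝒮.filter fun S => lam S < 0).card := by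
        rw [Finset.one_lt_card]
        exact ⟨S, Finset.mem_filter.mpr ⟨hS, h⟩, T, Finset.mem_filter.mpr ⟨hT, hTneg⟩, hST⟩
      have hsc' : (𝒮.filter fun S => lam S < 0).card ≤ 1 := hsc
      omega
    · exact absurd h (hnz S hS)
    · exact h
  refine ⟨T, hT, hTneg, huniq, ?_⟩
  intro i hi S hS hiS
  have hy' := hy i
  have hzero : ∀ S ∈ 𝒮, lam S * chi S i = 0 := by
    refine (Finset.sum_eq_zero_iff_of_nonneg ?_).mp hy'
    · intro S' hS'
      by_cases h : S' = T
      · subst h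
        simp [chi, hi]
      · have := huniq S' hS' h
        have : (0:ℝ) ≤ chi S' i := by unfold chi; positivity
        positivity
  have := hzero S hS
  rw [chi] at this
  simp only [hiS, if_pos] at this
  rcases mul_eq_zero.mp this with h | h
  · exact hnz S hS h
  · norm_num at h

private lemma deg_aff (𝒮 : Finset (Finset α)) (hnt : IsNontrivial 𝒮)
    (lam : Finset α → ℝ) (hy : CombYields 𝒮 lam 0) (hsc : SemiConic 𝒮 lam)
    (hnz : ∀ S ∈ 𝒮, lam S ≠ 0) (hsum : ∑ S ∈ 𝒮, lam S = 0) : False := by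
  obtain ⟨T, hT, hTneg, hpos, hout⟩ := deg_common 𝒮 hnt lam hy hsc hnz
  have hin : ∀ i ∈ T, ∀ S ∈ 𝒮, i ∈ S := by
    intro i hi S hS
    have hkey : ∑ S ∈ 𝒮, (lam S - lam S * chi S i) = 0 := by
      rw [Finset.sum_sub_distrib, hsum, hy i, sub_zero]
    have hterms : ∀ S ∈ 𝒮, lam S - lam S * chi S i = 0 := by
      refine (Finset.sum_eq_zero_iff_of_nonneg ?_).mp hkey
      intro S' hS'
      by_cases h : S' = T
      · subst h
        simp [chi, hi]
      · have h1 := hpos S' hS' h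
        have h2 : chi S' i ≤ 1 := by unfold chi; split <;> norm_num
        nlinarith
    have hSt := hterms S hS
    by_contra hiS
    rw [chi] at hSt
    simp only [hiS, if_neg, not_false_iff, mul_zero, sub_zero] at hSt
    exact hnz S hS hSt
  have hST : ∀ S ∈ 𝒮, S = T := by
    intro S hS
    ext i
    constructor
    · intro hiS
      by_contra hiT
      exact hout i hiT S hS hiS
    · intro hiT
      exact hin i hiT S hS
  have h𝒮T : 𝒮 = {T} := Finset.eq_singleton_iff_unique_mem.mpr ⟨hT, hST⟩
  rw [h𝒮T, Finset.sum_singleton] at hsum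
  exact absurd hsum (ne_of_lt hTneg)

private lemma deg_lin (𝒮 : Finset (Finset α)) (hnt : IsNontrivial 𝒮)
    (lam : Finset α → ℝ) (hy : CombYields 𝒮 lam 0) (hsc : SemiConic 𝒮 lam)
    (hnz : ∀ S ∈ 𝒮, lam S ≠ 0) (hun : 𝒮.sup id = (Finset.univ : Finset α)) : False := by
  obtain ⟨T, hT, _, _, hout⟩ := deg_common 𝒮 hnt lam hy hsc hnz
  have hTuniv : T = (Finset.univ : Finset α) := by
    rw [Finset.eq_univ_iff_forall]
    intro i
    by_contra hi
    have hmem : i ∈ 𝒮.sup id := by rw [hun]; exact Finset.mem_univ i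
    obtain ⟨S, hS, hiS⟩ := Finset.mem_sup.mp hmem
    exact hout i hi S hS hiS
  exact hnt.2.2 (hTuniv ▸ hT)

private lemma perturb (𝒮 : Finset (Finset α)) (hnt : IsNontrivial 𝒮)
    (lam c : Finset α → ℝ) (r : ℝ)
    (hy : CombYields 𝒮 lam r) (hsc : SemiConic 𝒮 lam) (hnz : ∀ S ∈ 𝒮, lam S ≠ 0)
    (hc0 : ∀ i : α, ∑ S ∈ 𝒮, c S * chi S i = 0)
    (S0 : Finset α) (hS0 : S0 ∈ 𝒮) (hcS0 : c S0 ≠ 0)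
    (hmin : ∀ 𝒞 ⊂ 𝒮, ¬ IsSemiBalanced 𝒞) :
    ∃ a : ℝ, a ≠ 0 ∧ ∀ S ∈ 𝒮, c S = a * lam S := by
  classical
  set F := 𝒮.filter (fun S => c S ≠ 0) with hF
  have hFne : F.Nonempty := ⟨S0, Finset.mem_filter.mpr ⟨hS0, hcS0⟩⟩
  obtain ⟨S1, hS1F, hS1min⟩ := F.exists_min_image (fun S => |lam S / c S|) hFne
  obtain ⟨hS1, hcS1⟩ := Finset.mem_filter.mp hS1F
  set t : ℝ := -lam S1 / c S1 with ht
  have hlamS1 := hnz S1 hS1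
  have ht0 : t ≠ 0 := by
    rw [ht]; exact div_ne_zero (neg_ne_zero.mpr hlamS1) hcS1
  set lam' : Finset α → ℝ := fun S => lam S + t * c S with hlam'
  have hS1zero : lam' S1 = 0 := by
    simp only [hlam', ht]
    field_simp
    ring
  have hsign : ∀ S ∈ 𝒮, 0 ≤ lam S * lam' S := by
    intro S hS
    by_cases hcS : c S = 0
    · simp only [hlam', hcS, mul_zero, add_zero]
      exact mul_self_nonneg _
    · have hmem : S ∈ F := Finset.mem_filter.mpr ⟨hS, hcS⟩
      have habst : |t| = |lam S1 / c S1| := by rw [ht, neg_div, abs_neg]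
      have h1 : |t| ≤ |lam S / c S| := habst ▸ hS1min S hmem
      have h2 : |t * c S| ≤ |lam S| := by
        rw [abs_mul]
        calc |t| * |c S| ≤ |lam S / c S| * |c S| := by
              gcongr
          _ = |lam S| := by
              rw [abs_div, div_mul_cancel₀ _ (abs_ne_zero.mpr hcS)]
      have h3 : -(|lam S| * |t * c S|) ≤ lam S * (t * c S) := by
        rw [← abs_mul]; exact neg_abs_le _
      have h4 : |lam S| * |t * c S| ≤ |lam S| * |lam S| := by
        gcongr
      have h5 : |lam S| * |lam S| = lam S * lam S := abs_mul_abs_self _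
      simp only [hlam']
      nlinarith
  by_cases hdeg : ∀ S ∈ 𝒮, lam' S = 0
  · refine ⟨-1/t, by simp [ht0], fun S hS => ?_⟩
    have hd := hdeg S hS
    simp only [hlam'] at hd
    field_simp
    linarith
  · push_neg at hdeg
    obtain ⟨S2, hS2, hS2ne⟩ := hdeg
    exfalso
    set 𝒞 := 𝒮.filter (fun S => lam' S ≠ 0) with h𝒞
    have hsub : 𝒞 ⊆ 𝒮 := Finset.filter_subset _ _
    have hss : 𝒞 ⊂ 𝒮 := (Finset.ssubset_iff_of_subset hsub).mpr
      ⟨S1, hS1, by simp [h𝒞, hS1zero]⟩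
    refine hmin 𝒞 hss ⟨⟨⟨S2, Finset.mem_filter.mpr ⟨hS2, hS2ne⟩⟩,
      fun h => hnt.2.1 (hsub h), fun h => hnt.2.2 (hsub h)⟩, lam', r, ?_, ?_, ?_⟩
    · intro i
      rw [h𝒞, Finset.sum_filter_of_ne (fun S _ hne => left_ne_zero_of_mul hne)]
      have heq : ∀ S ∈ 𝒮, lam' S * chi S i = lam S * chi S i + t * (c S * chi S i) := by
        intro S _
        simp only [hlam']
        ring
      rw [Finset.sum_congr rfl heq, Finset.sum_add_distrib, ← Finset.mul_sum, hy i, hc0 i,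
        mul_zero, add_zero]
    · have hsubf : 𝒞.filter (fun S => lam' S < 0) ⊆ 𝒮.filter (fun S => lam S < 0) := by
        intro S hSf
        simp only [h𝒞, Finset.mem_filter] at hSf ⊢
        obtain ⟨⟨hS, _⟩, hneg⟩ := hSf
        refine ⟨hS, ?_⟩
        rcases lt_trichotomy (lam S) 0 with h|h|h
        · exact h
        · exact absurd h (hnz S hS)
        · nlinarith [hsign S hS]
      exact le_trans (Finset.card_le_card hsubf) hsc
    · intro S hS
      exact (Finset.mem_filter.mp hS).2

theorem stmt4 (h2 : 2 ≤ Fintype.card α) (𝒮 : Finset (Finset α))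
    (hnt : IsNontrivial 𝒮) :
    IsMinSemiBalanced 𝒮 ↔
      (IsSemiBalanced 𝒮 ∧ AffIndep 𝒮 ∧
        (𝒮.sup id = (Finset.univ : Finset α) → LinIndep 𝒮)) := by
  have hne : Nonempty α := Fintype.card_pos_iff.mp (by omega)
  constructor
  · rintro ⟨hsb, hmin⟩
    obtain ⟨-, lam, r, hy, hsc, hnz⟩ := hsb
    refine ⟨⟨hnt, lam, r, hy, hsc, hnz⟩, ?_, ?_⟩
    · intro c hcsum hcchi S hS
      by_contra hcS
      obtain ⟨a, ha0, hprop⟩ := perturb 𝒮 hnt lam c r hy hsc hnz hcchi S hS hcS hmin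
      obtain ⟨i⟩ := hne
      have h1 : (0:ℝ) = a * r := by
        rw [← hcchi i, ← hy i, Finset.mul_sum]
        exact Finset.sum_congr rfl fun S' hS' => by rw [hprop S' hS']; ring
      have hr0 : r = 0 := by
        rcases mul_eq_zero.mp h1.symm with h | h
        · exact absurd h ha0
        · exact h
      have h2 : a * ∑ S ∈ 𝒮, lam S = 0 := by
        rw [Finset.mul_sum, ← hcsum]
        exact Finset.sum_congr rfl fun S' hS' => (hprop S' hS').symm
      have hsum0 : ∑ S ∈ 𝒮, lam S = 0 := by
        rcases mul_eq_zero.mp h2 with h | h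
        · exact absurd h ha0
        · exact h
      exact deg_aff 𝒮 hnt lam (hr0 ▸ hy) hsc hnz hsum0
    · intro hun c hcchi S hS
      by_contra hcS
      obtain ⟨a, ha0, hprop⟩ := perturb 𝒮 hnt lam c r hy hsc hnz hcchi S hS hcS hmin
      obtain ⟨i⟩ := hne
      have h1 : (0:ℝ) = a * r := by
        rw [← hcchi i, ← hy i, Finset.mul_sum]
        exact Finset.sum_congr rfl fun S' hS' => by rw [hprop S' hS']; ring
      have hr0 : r = 0 := by
        rcases mul_eq_zero.mp h1.symm with h | h
        · exact absurd h ha0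
        · exact h
      exact deg_lin 𝒮 hnt lam (hr0 ▸ hy) hsc hnz hun
  · rintro ⟨hsb, haff, hlin⟩
    refine ⟨hsb, fun 𝒞 hss hCsb => ?_⟩
    obtain ⟨-, lam, r, hy, hsc, hnz⟩ := hsb
    obtain ⟨hCnt, lam1, r', hy', hsc', hnz'⟩ := hCsb
    classical
    set lam'' : Finset α → ℝ := fun S => if S ∈ 𝒞 then lam1 S else 0 with hlam''
    have hsub := hss.subset
    obtain ⟨S1, hS1S, hS1C⟩ := Finset.exists_of_ssubset hss
    obtain ⟨S2, hS2⟩ := hCnt.1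
    have hy'' : ∀ i : α, ∑ S ∈ 𝒮, lam'' S * chi S i = r' := by
      intro i
      rw [← hy' i, ← Finset.sum_subset hsub (fun S _ hS => by simp [hlam'', hS])]
      exact Finset.sum_congr rfl fun S hS => by simp [hlam'', hS]
    by_cases hun : 𝒮.sup id = (Finset.univ : Finset α)
    · have lin := hlin hun
      have hc := lin (fun S => r * lam'' S - r' * lam S) (fun i => by
        have heq : ∀ S ∈ 𝒮, (r * lam'' S - r' * lam S) * chi S i =
            r * (lam'' S * chi S i) - r' * (lam S * chi S i) := fun S _ => by ring
        rw [Finset.sum_congr rfl heq, Finset.sum_sub_distrib, ← Finset.mul_sum,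
          ← Finset.mul_sum, hy'' i, hy i]
        ring) S1 hS1S
      simp only [hlam'', hS1C, if_neg, not_false_iff, mul_zero, zero_sub, neg_eq_zero] at hc
      have hr'0 : r' = 0 := by
        rcases mul_eq_zero.mp hc with h | h
        · exact h
        · exact absurd h (hnz S1 hS1S)
      have hz := lin lam'' (fun i => by rw [hy'' i, hr'0]) S2 (hsub hS2)
      simp only [hlam'', hS2, if_pos] at hz
      exact hnz' S2 hS2 hz
    · have hiex : ∃ i : α, i ∉ 𝒮.sup id := by
        by_contra h
        push_neg at h
        exact hun (Finset.eq_univ_iff_forall.mpr h)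
      obtain ⟨i0, hi0⟩ := hiex
      have hout : ∀ S ∈ 𝒮, i0 ∉ S := fun S hS hi =>
        hi0 (Finset.mem_sup.mpr ⟨S, hS, hi⟩)
      have hr0 : r = 0 := by
        rw [← hy i0]
        exact Finset.sum_eq_zero fun S hS => by simp [chi, hout S hS]
      have hr'0 : r' = 0 := by
        rw [← hy'' i0]
        exact Finset.sum_eq_zero fun S hS => by simp [chi, hout S hS]
      by_cases hs0 : ∑ S ∈ 𝒮, lam'' S = 0
      · have hz := haff lam'' hs0 (fun i => by rw [hy'' i, hr'0]) S2 (hsub hS2)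
        simp only [hlam'', hS2, if_pos] at hz
        exact hnz' S2 hS2 hz
      · have key := haff (fun S => (∑ S' ∈ 𝒮, lam'' S') * lam S - (∑ S' ∈ 𝒮, lam S') * lam'' S)
          (by
            rw [Finset.sum_sub_distrib, ← Finset.mul_sum, ← Finset.mul_sum]
            ring)
          (fun i => by
            have heq : ∀ S ∈ 𝒮, ((∑ S' ∈ 𝒮, lam'' S') * lam S - (∑ S' ∈ 𝒮, lam S') * lam'' S) * chi S i =
                (∑ S' ∈ 𝒮, lam'' S') * (lam S * chi S i) - (∑ S' ∈ 𝒮, lam S') * (lam'' S * chi S i) :=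
              fun S _ => by ring
            rw [Finset.sum_congr rfl heq, Finset.sum_sub_distrib, ← Finset.mul_sum,
              ← Finset.mul_sum, hy i, hy'' i, hr0, hr'0]
            ring) S1 hS1S
        simp only [hlam'', hS1C, if_neg, not_false_iff, mul_zero, sub_zero] at key
        rcases mul_eq_zero.mp key with h | h
        · exact hs0 h
        · exact hnz S1 hS1S h
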